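/- Let ψ: T → S be a proper morphism between restriction semigroups. The following are equivalent: (1) for every s ∈ S and e ∈ P(T), if e ≤ t^* for some t ∈ T with ψ(t) ≤ s, then e ≤ r^* for some r ∈ T with ψ(r) = s (i.e., ψ̃ = ψ̂ as families of partial maps); (2) for all s, t ∈ S with s ≤ t and every u ∈ T with ψ(u) = s, there exists v ∈ T with ψ(v) = t and u ≤ v; (3) for every s ∈ S: {u ∈ T : ψ(u) ≤ s} = {u ∈ T : u ≤ v for some v with ψ(v) = s}, i.e., ψ⁻¹(s↓) = (ψ⁻¹(s))↓. -/
import Mathlib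


/-- A (two-sided) restriction semigroup: a semigroup with unary operations
`rstar` (`x ↦ x^*`) and `rplus` (`x ↦ x^+`) satisfying the standard identities. -/
class RestrictionSemigroup (S : Type*) extends Semigroup S where
  rstar : S → S
  rplus : S → S
  rplus_mul_self : ∀ x : S, rplus x * x = x
  rplus_comm : ∀ x y : S, rplus x * rplus y = rplus y * rplus x
  rplus_rplus_mul : ∀ x y : S, rplus (rplus x * y) = rplus x * rplus y
  mul_rplus : ∀ x y : S, rplus (x * y) * x = x * rplus y
  mul_rstar_self : ∀ x : S, x * rstar x = x
  rstar_comm : ∀ x y : S, rstar x * rstar y = rstar y * rstar x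
  rstar_mul_rstar : ∀ x y : S, rstar (x * rstar y) = rstar x * rstar y
  rstar_mul : ∀ x y : S, y * rstar (x * y) = rstar x * y
  rstar_rplus : ∀ x : S, rstar (rplus x) = rplus x
  rplus_rstar : ∀ x : S, rplus (rstar x) = rstar x

open RestrictionSemigroup

/-- `e` is a projection: `e ∈ P(S) = {s^* : s ∈ S}`. -/
def IsProj {S : Type*} [RestrictionSemigroup S] (e : S) : Prop :=
  ∃ s : S, rstar s = e

/-- The natural partial order: `s ≤ t` iff `s = t f` for some projection `f`. -/
def rle {S : Type*} [RestrictionSemigroup S] (s t : S) : Prop :=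
  ∃ f : S, IsProj f ∧ s = t * f

/-- Compatibility: `s ∼ t` iff `s t^* = t s^*` and `t^+ s = s^+ t`. -/
def compat {S : Type*} [RestrictionSemigroup S] (s t : S) : Prop :=
  s * rstar t = t * rstar s ∧ rplus t * s = rplus s * t


section Aux
variable {S : Type*} [RestrictionSemigroup S]

lemma rstar_idem' (x : S) : rstar (rstar x) = rstar x := by
  rw [← rplus_rstar x, rstar_rplus, rplus_rstar]

lemma IsProj.rstar_eq' {e : S} (h : IsProj e) : rstar e = e := by
  obtain ⟨s, rfl⟩ := h; exact rstar_idem' s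

lemma IsProj.idem' {e : S} (h : IsProj e) : e * e = e := by
  have := mul_rstar_self e
  rwa [h.rstar_eq'] at this

lemma IsProj.mul' {e f : S} (he : IsProj e) (hf : IsProj f) : IsProj (e * f) := by
  obtain ⟨a, rfl⟩ := he; obtain ⟨b, rfl⟩ := hf
  exact ⟨a * rstar b, rstar_mul_rstar a b⟩

lemma rle_refl' (s : S) : rle s s := ⟨rstar s, ⟨s, rfl⟩, (mul_rstar_self s).symm⟩

lemma rle_trans' {s t w : S} (h1 : rle s t) (h2 : rle t w) : rle s w := by
  obtain ⟨f, hf, rfl⟩ := h1; obtain ⟨g, hg, rfl⟩ := h2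
  exact ⟨g * f, hg.mul' hf, mul_assoc ..⟩

lemma rstar_mono' {s t : S} (h : rle s t) : rle (rstar s) (rstar t) := by
  obtain ⟨f, hf, rfl⟩ := h
  obtain ⟨b, rfl⟩ := hf
  exact ⟨rstar b, ⟨b, rfl⟩, rstar_mul_rstar t b⟩

lemma proj_absorb' {x y : S} (h : rle (rstar x) (rstar y)) :
    rstar y * rstar x = rstar x := by
  obtain ⟨g, hg, h⟩ := h
  rw [h, ← mul_assoc, IsProj.idem' (e := rstar y) ⟨y, rfl⟩]

lemma mul_rstar_mul_proj (t g : S) (hg : IsProj g) : t * rstar (t * g) = t * g := by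
  obtain ⟨y, rfl⟩ := hg
  rw [rstar_mul_rstar, ← mul_assoc, mul_rstar_self]

end Aux

theorem stmt18 {T S : Type*} [RestrictionSemigroup T] [RestrictionSemigroup S]
    (ψ : T → S) (hsurj : Function.Surjective ψ)
    (hmul : ∀ a b : T, ψ (a * b) = ψ a * ψ b)
    (hstar : ∀ a : T, ψ (rstar a) = rstar (ψ a))
    (hplus : ∀ a : T, ψ (rplus a) = rplus (ψ a))
    (hproper : ∀ a b : T, ψ a = ψ b → compat a b) :
    List.TFAE
      [∀ (s : S) (e : T), IsProj e →
          (∃ t : T, rle e (rstar t) ∧ rle (ψ t) s) →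
          ∃ r : T, rle e (rstar r) ∧ ψ r = s,
       ∀ s t : S, rle s t → ∀ u : T, ψ u = s → ∃ v : T, ψ v = t ∧ rle u v,
       ∀ s : S, {u : T | rle (ψ u) s} = {u : T | ∃ v : T, ψ v = s ∧ rle u v}] := by
  have hmono : ∀ u v : T, rle u v → rle (ψ u) (ψ v) := by
    rintro u v ⟨f, ⟨b, rfl⟩, rfl⟩
    exact ⟨ψ (rstar b), ⟨ψ b, (hstar b).symm⟩, hmul v (rstar b)⟩
  tfae_have 1 → 2
  · intro h1 s t hst u hu
    obtain ⟨r, hre, hψr⟩ := h1 t (rstar u) ⟨u, rfl⟩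
      ⟨u, rle_refl' _, by rw [hu]; exact hst⟩
    refine ⟨r, hψr, rstar u, ⟨u, rfl⟩, ?_⟩
    -- w = r * rstar u
    have hrw : rstar (r * rstar u) = rstar u := by
      rw [rstar_mul_rstar]
      exact proj_absorb' hre
    have hψw : ψ (r * rstar u) = ψ u := by
      obtain ⟨g, hg, hs⟩ := hst
      rw [hmul, hstar, hu, hψr, hs, mul_rstar_mul_proj t g hg]
    have hc := (hproper u (r * rstar u) hψw.symm).1
    rw [hrw] at hc
    calc u = u * rstar u := (mul_rstar_self u).symm
      _ = (r * rstar u) * rstar u := hc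
      _ = r * (rstar u * rstar u) := mul_assoc ..
      _ = r * rstar u := by rw [IsProj.idem' (e := rstar u) ⟨u, rfl⟩]
  tfae_have 2 → 3
  · intro h2 s
    ext u
    simp only [Set.mem_setOf_eq]
    constructor
    · intro h
      obtain ⟨v, hv, huv⟩ := h2 (ψ u) s h u rfl
      exact ⟨v, hv, huv⟩
    · rintro ⟨v, hv, huv⟩
      rw [← hv]
      exact hmono u v huv
  tfae_have 3 → 1
  · intro h3 s e he ⟨t, het, hts⟩
    have : t ∈ {u : T | rle (ψ u) s} := hts
    rw [h3 s] at this
    obtain ⟨v, hv, htv⟩ := this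
    exact ⟨v, rle_trans' het (rstar_mono' htv), hv⟩
  tfae_finish
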